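/- For every integer m ≥ 1 and every real a with a ≤ 1/(m+1), there is no b > 0 such that -ln(1-x) ≤ x + x²/2 + ... + xᵐ/m + a·|x|^(m+1) holds for all x with |x| ≤ b. -/

import Mathlib

theorem stmt_1 (m : ℕ) (hm : 1 ≤ m) (a : ℝ) (ha : a ≤ 1 / ((m : ℝ) + 1)) :
    ¬ ∃ b : ℝ, 0 < b ∧ ∀ x : ℝ, |x| ≤ b →
      -Real.log (1 - x) ≤ (∑ k ∈ Finset.Icc 1 m, x ^ k / (k : ℝ))
        + a * |x| ^ (m + 1) := by
  rintro ⟨b, hb, hball⟩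
  set x : ℝ := min b (1/2) with hx
  have hx0 : 0 < x := lt_min hb (by norm_num)
  have hx1 : x ≤ 1/2 := min_le_right _ _
  have hxb : |x| ≤ b := by
    rw [abs_of_pos hx0]; exact min_le_left _ _
  have hlt : |x| < 1 := by rw [abs_of_pos hx0]; linarith
  have hs := Real.hasSum_pow_div_log_of_abs_lt_one hlt
  -- partial sum of first m+2 terms ≤ total
  have hnn : ∀ n : ℕ, 0 ≤ x ^ (n + 1) / (n + 1) := fun n =>
    div_nonneg (pow_nonneg hx0.le _) (by positivity)
  have hle : ∑ n ∈ Finset.range (m + 2), x ^ (n + 1) / (n + 1) ≤ -Real.log (1 - x) :=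
    sum_le_hasSum _ (fun n _ => hnn n) hs
  have hsum_eq : ∑ n ∈ Finset.range m, x ^ (n + 1) / ((n : ℝ) + 1)
      = ∑ k ∈ Finset.Icc 1 m, x ^ k / (k : ℝ) := by
    rw [← Finset.Ico_add_one_right_eq_Icc,
      Finset.sum_Ico_eq_sum_range (f := fun k => x ^ k / (k : ℝ)) (m := 1) (n := m + 1)]
    simp [add_comm]
  have hexp : ∑ n ∈ Finset.range (m + 2), x ^ (n + 1) / ((n : ℝ) + 1)
      = (∑ k ∈ Finset.Icc 1 m, x ^ k / (k : ℝ)) + x ^ (m + 1) / ((m : ℝ) + 1)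
        + x ^ (m + 2) / ((m : ℝ) + 2) := by
    rw [Finset.sum_range_succ, Finset.sum_range_succ, hsum_eq]
    push_cast; ring
  have hmain := hball x hxb
  rw [abs_of_pos hx0] at hmain
  have h1 : a * x ^ (m + 1) ≤ x ^ (m + 1) / ((m : ℝ) + 1) := by
    rw [div_eq_mul_inv, mul_comm (x ^ (m+1))]
    apply mul_le_mul_of_nonneg_right _ (pow_nonneg hx0.le _)
    rwa [one_div] at ha
  have h2 : 0 < x ^ (m + 2) / ((m : ℝ) + 2) := by positivity
  rw [hexp] at hle
  linarith
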